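/- Constructive Comparison: for guaranteed scoring games G, H, G ≽ H if and only if (1) L̲s(G) ≥ L̲s(H) and R̄s(G) ≥ R̄s(H); (2) for every Left option H^L, either some G^L ≽ H^L or some Right option H^{LR} of H^L satisfies G ≽ H^{LR}; and (3) for every Right option G^R, either some H^R ≼ G^R or some Left option G^{RL} of G^R satisfies G^{RL} ≽ H. -/

import Mathlib

/-- A scoring game: `la`/`ra` are the atom values (relevant when the
corresponding option list is empty), `L`/`R` the Left and Right options. -/
inductive SG : Type
  | mk (la ra : ℝ) (L R : List SG) : SG

namespace SG

theorem sizeOf_lt_of_mem {g : SG} {l : List SG} (h : g ∈ l) : sizeOf g < sizeOf l :=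
  List.sizeOf_lt_of_mem h

noncomputable instance : DecidableEq SG := Classical.decEq _

def la : SG → ℝ | mk a _ _ _ => a
def ra : SG → ℝ | mk _ b _ _ => b
def L : SG → List SG | mk _ _ l _ => l
def R : SG → List SG | mk _ _ _ r => r

/-- The list of atom values occurring in atomic followers of a game. -/
def atomList : SG → List ℝ
  | mk a b ls rs =>
    (if ls.isEmpty then [a] else (ls.attach.map (fun x => atomList x.1)).flatten)
    ++ (if rs.isEmpty then [b] else (rs.attach.map (fun x => atomList x.1)).flatten)
decreasing_by all_goals (simp only [SG.mk.sizeOf_spec]; (first | (have := sizeOf_lt_of_mem x.2) | (have := sizeOf_lt_of_mem (by assumption : x ∈ _))); omega)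

/-- The guaranteed condition. -/
def Guaranteed : SG → Prop
  | mk a b ls rs =>
    (∀ x ∈ ls, Guaranteed x) ∧ (∀ x ∈ rs, Guaranteed x) ∧
    (ls = [] → ∀ s ∈ (mk a b ls rs).atomList, a ≤ s) ∧
    (rs = [] → ∀ s ∈ (mk a b ls rs).atomList, s ≤ b)
decreasing_by all_goals (simp only [SG.mk.sizeOf_spec]; (first | (have := sizeOf_lt_of_mem x.2) | (have := sizeOf_lt_of_mem (by assumption : x ∈ _))); omega)

/-- Disjunctive sum. -/
noncomputable def add : SG → SG → SG
  | mk a1 b1 L1 R1, mk a2 b2 L2 R2 =>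
    mk (a1 + a2) (b1 + b2)
      (L1.attach.map (fun x => add x.1 (mk a2 b2 L2 R2))
        ++ L2.attach.map (fun x => add (mk a1 b1 L1 R1) x.1))
      (R1.attach.map (fun x => add x.1 (mk a2 b2 L2 R2))
        ++ R2.attach.map (fun x => add (mk a1 b1 L1 R1) x.1))
termination_by g h => sizeOf g + sizeOf h
decreasing_by all_goals (simp only [SG.mk.sizeOf_spec]; (first | (have := sizeOf_lt_of_mem x.2) | (have := sizeOf_lt_of_mem (by assumption : x ∈ _))); omega)

/-- Left- and Right-stops (as a pair). -/
noncomputable def stops : SG → ℝ × ℝ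
  | mk a b ls rs =>
    (if ls.isEmpty then a else (WithBot.unbotD 0 (ls.attach.map (fun x => (stops x.1).2)).maximum),
     if rs.isEmpty then b else (WithTop.untopD 0 (rs.attach.map (fun x => (stops x.1).1)).minimum))
decreasing_by all_goals (simp only [SG.mk.sizeOf_spec]; (first | (have := sizeOf_lt_of_mem x.2) | (have := sizeOf_lt_of_mem (by assumption : x ∈ _))); omega)

noncomputable def Ls (g : SG) : ℝ := g.stops.1
noncomputable def Rs (g : SG) : ℝ := g.stops.2

/-- The conjugate: interchange Left and Right and negate atoms. -/
noncomputable def conj : SG → SG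
  | mk a b ls rs =>
    mk (-b) (-a) (rs.attach.map (fun x => conj x.1)) (ls.attach.map (fun x => conj x.1))
decreasing_by all_goals (simp only [SG.mk.sizeOf_spec]; (first | (have := sizeOf_lt_of_mem x.2) | (have := sizeOf_lt_of_mem (by assumption : x ∈ _))); omega)

/-- The game ⟨∅^s | ∅^s⟩ of a real number `s`. -/
def num (s : ℝ) : SG := mk s s [] []

/-- The zero game ⟨∅^0 | ∅^0⟩. -/
def zero : SG := num 0

/-- Waiting moves: the image of the Normal-play integer `n`. -/
def wait : ℕ → SG
  | 0 => zero
  | n + 1 => mk 0 0 [wait n] []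

/-- Birthday: the depth of the game tree. -/
def birthday : SG → ℕ
  | mk _ _ ls rs =>
    max (WithBot.unbotD 0 (ls.attach.map (fun x => birthday x.1 + 1)).maximum)
        (WithBot.unbotD 0 (rs.attach.map (fun x => birthday x.1 + 1)).maximum)
decreasing_by all_goals (simp only [SG.mk.sizeOf_spec]; (first | (have := sizeOf_lt_of_mem x.2) | (have := sizeOf_lt_of_mem (by assumption : x ∈ _))); omega)

/-- `Ge G H` is the order `G ≽ H`. -/
def Ge (G H : SG) : Prop :=
  ∀ X : SG, X.Guaranteed → Ls (G.add X) ≥ Ls (H.add X) ∧ Rs (G.add X) ≥ Rs (H.add X)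

/-- Equivalence `G ∼ H`. -/
def Equiv (G H : SG) : Prop := Ge G H ∧ Ge H G

/-- Right's pass-allowed Left-stop `L̲s(G) = min_n Ls(G - n̂)`. -/
noncomputable def lsU (G : SG) : ℝ := ⨅ n : ℕ, Ls (G.add (wait n).conj)

/-- Left's pass-allowed Right-stop `R̄s(G) = max_n Rs(G + n̂)`. -/
noncomputable def rsO (G : SG) : ℝ := ⨆ n : ℕ, Rs (G.add (wait n))

/-- `L̄s(G) = max_n Ls(G + n̂)`. -/
noncomputable def lsO (G : SG) : ℝ := ⨆ n : ℕ, Ls (G.add (wait n))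

/-- `R̲s(G) = min_n Rs(G + n̂)`. -/
noncomputable def rsU (G : SG) : ℝ := ⨅ n : ℕ, Rs (G.add (wait n))

/-- Identity of games: same tree structure (up to reordering of options),
with identical atoms at atomic positions. -/
def Ident : SG → SG → Prop
  | mk a1 b1 L1 R1, mk a2 b2 L2 R2 =>
    (L1 = [] ↔ L2 = []) ∧ (L1 = [] → a1 = a2) ∧
    (R1 = [] ↔ R2 = []) ∧ (R1 = [] → b1 = b2) ∧
    (∀ x ∈ L1, ∃ y : {z // z ∈ L2}, Ident x y.1) ∧
    (∀ y ∈ L2, ∃ x : {z // z ∈ L1}, Ident x.1 y) ∧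
    (∀ x ∈ R1, ∃ y : {z // z ∈ R2}, Ident x y.1) ∧
    (∀ y ∈ R2, ∃ x : {z // z ∈ R1}, Ident x.1 y)
termination_by g h => sizeOf g
decreasing_by all_goals (simp only [SG.mk.sizeOf_spec]; (first | (have := sizeOf_lt_of_mem x.2) | (have := sizeOf_lt_of_mem (by assumption : x ∈ _))); omega)

/-- `Linked H G`: `H` is linked to `G` (by some guaranteed `T`). -/
def Linked (H G : SG) : Prop :=
  ∃ T : SG, T.Guaranteed ∧ Ls (H.add T) < 0 ∧ 0 < Rs (G.add T)

/-- Replace every atom of `G` by `∅^x`. -/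
def subst (v : ℝ) : SG → SG
  | mk _ _ ls rs =>
    mk v v (ls.attach.map (fun x => subst v x.1)) (rs.attach.map (fun x => subst v x.1))
decreasing_by all_goals (simp only [SG.mk.sizeOf_spec]; (first | (have := sizeOf_lt_of_mem x.2) | (have := sizeOf_lt_of_mem (by assumption : x ∈ _))); omega)

/-- The maximum atom value in `G`. -/
noncomputable def maxAtom (G : SG) : ℝ := WithBot.unbotD 0 G.atomList.maximum

/-- The minimum atom value in `G`. -/
noncomputable def minAtom (G : SG) : ℝ := WithTop.untopD 0 G.atomList.minimum

-- infra
section Lists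
variable {α : Type*} [LinearOrder α] {l : List α} {x c : α}

theorem max_unbot_mem (d : α) (h : l ≠ []) : WithBot.unbotD d l.maximum ∈ l := by
  cases hm : l.maximum with
  | bot => rw [List.maximum_eq_bot] at hm; exact absurd hm h
  | coe a => simpa using List.maximum_mem hm

theorem le_max_unbot (d : α) (hx : x ∈ l) : x ≤ WithBot.unbotD d l.maximum := by
  cases hm : l.maximum with
  | bot => rw [List.maximum_eq_bot] at hm; simp [hm] at hx
  | coe a =>
    have := List.le_maximum_of_mem hx hm
    simpa using this

theorem max_unbot_le (d : α) (h : l ≠ []) (hc : ∀ y ∈ l, y ≤ c) : WithBot.unbotD d l.maximum ≤ c :=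
  hc _ (max_unbot_mem d h)

theorem min_untop_mem (d : α) (h : l ≠ []) : WithTop.untopD d l.minimum ∈ l := by
  cases hm : l.minimum with
  | top => rw [List.minimum_eq_top] at hm; exact absurd hm h
  | coe a => simpa using List.minimum_mem hm

theorem min_untop_le (d : α) (hx : x ∈ l) : WithTop.untopD d l.minimum ≤ x := by
  cases hm : l.minimum with
  | top => rw [List.minimum_eq_top] at hm; simp [hm] at hx
  | coe a =>
    have := List.minimum_le_of_mem hx hm
    simpa using this

theorem le_min_untop (d : α) (h : l ≠ []) (hc : ∀ y ∈ l, c ≤ y) : c ≤ WithTop.untopD d l.minimum :=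
  hc _ (min_untop_mem d h)

end Lists

attribute [local simp] List.attach_map_val

theorem L_add (G X : SG) : (G.add X).L = G.L.map (·.add X) ++ X.L.map (G.add ·) := by
  cases G with | mk a1 b1 L1 R1 => cases X with | mk a2 b2 L2 R2 => rw [add]; simp [L]

theorem R_add (G X : SG) : (G.add X).R = G.R.map (·.add X) ++ X.R.map (G.add ·) := by
  cases G with | mk a1 b1 L1 R1 => cases X with | mk a2 b2 L2 R2 => rw [add]; simp [R]

theorem la_add (G X : SG) : (G.add X).la = G.la + X.la := by
  cases G with | mk a1 b1 L1 R1 => cases X with | mk a2 b2 L2 R2 => rw [add]; rfl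

theorem ra_add (G X : SG) : (G.add X).ra = G.ra + X.ra := by
  cases G with | mk a1 b1 L1 R1 => cases X with | mk a2 b2 L2 R2 => rw [add]; rfl

theorem Ls_def (G : SG) :
    Ls G = if G.L = [] then G.la else (WithBot.unbotD 0 (G.L.map Rs).maximum) := by
  cases G with | mk a b ls rs =>
  rw [Ls, stops]
  simp [L, la, List.isEmpty_iff]
  rfl

theorem Rs_def (G : SG) :
    Rs G = if G.R = [] then G.ra else (WithTop.untopD 0 (G.R.map Ls).minimum) := by
  cases G with | mk a b ls rs =>
  rw [Rs, stops]
  simp [R, ra, List.isEmpty_iff]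
  rfl

theorem Ls_of_nil {G : SG} (h : G.L = []) : Ls G = G.la := by rw [Ls_def, if_pos h]
theorem Rs_of_nil {G : SG} (h : G.R = []) : Rs G = G.ra := by rw [Rs_def, if_pos h]

theorem Rs_le_Ls_of_mem {G g : SG} (h : g ∈ G.L) : Rs g ≤ Ls G := by
  rw [Ls_def, if_neg (List.ne_nil_of_mem h)]
  exact le_max_unbot 0 (List.mem_map_of_mem h)

theorem Rs_le_Ls_of_memR {G g : SG} (h : g ∈ G.R) : Rs G ≤ Ls g := by
  rw [Rs_def, if_neg (List.ne_nil_of_mem h)]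
  exact min_untop_le 0 (List.mem_map_of_mem h)

theorem exists_Ls {G : SG} (h : G.L ≠ []) : ∃ g ∈ G.L, Ls G = Rs g := by
  rw [Ls_def, if_neg h]
  have := max_unbot_mem 0 (l := G.L.map Rs) (by simpa using h)
  obtain ⟨g, hg, he⟩ := List.mem_map.1 this
  exact ⟨g, hg, he.symm⟩

theorem exists_Rs {G : SG} (h : G.R ≠ []) : ∃ g ∈ G.R, Rs G = Ls g := by
  rw [Rs_def, if_neg h]
  have := min_untop_mem 0 (l := G.R.map Ls) (by simpa using h)
  obtain ⟨g, hg, he⟩ := List.mem_map.1 this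
  exact ⟨g, hg, he.symm⟩

theorem Ls_le {G : SG} (h : G.L ≠ []) {c : ℝ} (hc : ∀ g ∈ G.L, Rs g ≤ c) : Ls G ≤ c := by
  obtain ⟨g, hg, he⟩ := exists_Ls h; rw [he]; exact hc g hg

theorem le_Rs {G : SG} (h : G.R ≠ []) {c : ℝ} (hc : ∀ g ∈ G.R, c ≤ Ls g) : c ≤ Rs G := by
  obtain ⟨g, hg, he⟩ := exists_Rs h; rw [he]; exact hc g hg

theorem L_add_eq_nil {G X : SG} : (G.add X).L = [] ↔ G.L = [] ∧ X.L = [] := by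
  simp [L_add]

theorem R_add_eq_nil {G X : SG} : (G.add X).R = [] ↔ G.R = [] ∧ X.R = [] := by
  simp [R_add]

theorem mem_L_add {G X g : SG} :
    g ∈ (G.add X).L ↔ (∃ y ∈ G.L, g = y.add X) ∨ (∃ y ∈ X.L, g = G.add y) := by
  simp [L_add, eq_comm]

theorem mem_R_add {G X g : SG} :
    g ∈ (G.add X).R ↔ (∃ y ∈ G.R, g = y.add X) ∨ (∃ y ∈ X.R, g = G.add y) := by
  simp [R_add, eq_comm]

-- ===== Phase 2: atoms and guaranteed =====

theorem sizeOf_lt_L {G x : SG} (h : x ∈ G.L) : sizeOf x < sizeOf G := by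
  cases G with | mk a b ls rs =>
  have := sizeOf_lt_of_mem h
  simp only [SG.mk.sizeOf_spec]; simp only [L] at this; omega

theorem sizeOf_lt_R {G x : SG} (h : x ∈ G.R) : sizeOf x < sizeOf G := by
  cases G with | mk a b ls rs =>
  have := sizeOf_lt_of_mem h
  simp only [SG.mk.sizeOf_spec]; simp only [R] at this; omega

theorem atomList_def (G : SG) : G.atomList =
    (if G.L = [] then [G.la] else (G.L.map atomList).flatten)
    ++ (if G.R = [] then [G.ra] else (G.R.map atomList).flatten) := by
  cases G with | mk a b ls rs =>
  rw [atomList]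
  simp [L, R, la, ra, List.isEmpty_iff]
  congr

theorem mem_atomList_L {G x : SG} (hx : x ∈ G.L) {s : ℝ} (hs : s ∈ x.atomList) :
    s ∈ G.atomList := by
  rw [atomList_def]
  refine List.mem_append_left _ ?_
  rw [if_neg (List.ne_nil_of_mem hx)]
  exact List.mem_flatten.2 ⟨x.atomList, List.mem_map_of_mem hx, hs⟩

theorem mem_atomList_R {G x : SG} (hx : x ∈ G.R) {s : ℝ} (hs : s ∈ x.atomList) :
    s ∈ G.atomList := by
  rw [atomList_def]
  refine List.mem_append_right _ ?_
  rw [if_neg (List.ne_nil_of_mem hx)]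
  exact List.mem_flatten.2 ⟨x.atomList, List.mem_map_of_mem hx, hs⟩

theorem la_mem_atomList {G : SG} (h : G.L = []) : G.la ∈ G.atomList := by
  rw [atomList_def]; exact List.mem_append_left _ (by rw [if_pos h]; exact List.mem_singleton_self _)

theorem ra_mem_atomList {G : SG} (h : G.R = []) : G.ra ∈ G.atomList := by
  rw [atomList_def]; exact List.mem_append_right _ (by rw [if_pos h]; exact List.mem_singleton_self _)

theorem stops_mem_atomList (G : SG) : Ls G ∈ G.atomList ∧ Rs G ∈ G.atomList := by
  constructor
  · by_cases h : G.L = []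
    · rw [Ls_of_nil h]; exact la_mem_atomList h
    · obtain ⟨g, hg, he⟩ := exists_Ls h
      rw [he]
      exact mem_atomList_L hg (stops_mem_atomList g).2
  · by_cases h : G.R = []
    · rw [Rs_of_nil h]; exact ra_mem_atomList h
    · obtain ⟨g, hg, he⟩ := exists_Rs h
      rw [he]
      exact mem_atomList_R hg (stops_mem_atomList g).1
termination_by sizeOf G
decreasing_by exacts [sizeOf_lt_L hg, sizeOf_lt_R hg]

theorem guaranteed_def {G : SG} : G.Guaranteed ↔
    (∀ x ∈ G.L, x.Guaranteed) ∧ (∀ x ∈ G.R, x.Guaranteed) ∧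
    (G.L = [] → ∀ s ∈ G.atomList, G.la ≤ s) ∧
    (G.R = [] → ∀ s ∈ G.atomList, s ≤ G.ra) := by
  cases G with | mk a b ls rs =>
  rw [Guaranteed]
  rfl

theorem Guaranteed.memL {G x : SG} (hG : G.Guaranteed) (h : x ∈ G.L) : x.Guaranteed :=
  (guaranteed_def.1 hG).1 x h

theorem Guaranteed.memR {G x : SG} (hG : G.Guaranteed) (h : x ∈ G.R) : x.Guaranteed :=
  (guaranteed_def.1 hG).2.1 x h

theorem Guaranteed.atomL {G : SG} (hG : G.Guaranteed) (h : G.L = []) :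
    ∀ s ∈ G.atomList, G.la ≤ s := (guaranteed_def.1 hG).2.2.1 h

theorem Guaranteed.atomR {G : SG} (hG : G.Guaranteed) (h : G.R = []) :
    ∀ s ∈ G.atomList, s ≤ G.ra := (guaranteed_def.1 hG).2.2.2 h

theorem mem_atomList_add {G X : SG} {s : ℝ} (hs : s ∈ (G.add X).atomList) :
    ∃ u ∈ G.atomList, ∃ v ∈ X.atomList, s = u + v := by
  rw [atomList_def] at hs
  rcases List.mem_append.1 hs with h | h
  · by_cases hL : (G.add X).L = []
    · rw [if_pos hL] at h
      obtain ⟨h1, h2⟩ := L_add_eq_nil.1 hL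
      rw [List.mem_singleton] at h
      exact ⟨G.la, la_mem_atomList h1, X.la, la_mem_atomList h2, by rw [h, la_add]⟩
    · rw [if_neg hL] at h
      obtain ⟨l', hl', hsl⟩ := List.mem_flatten.1 h
      obtain ⟨y, hy, rfl⟩ := List.mem_map.1 hl'
      rcases mem_L_add.1 hy with ⟨z, hz, rfl⟩ | ⟨z, hz, rfl⟩
      · obtain ⟨u, hu, v, hv, he⟩ := mem_atomList_add hsl
        exact ⟨u, mem_atomList_L hz hu, v, hv, he⟩
      · obtain ⟨u, hu, v, hv, he⟩ := mem_atomList_add hsl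
        exact ⟨u, hu, v, mem_atomList_L hz hv, he⟩
  · by_cases hR : (G.add X).R = []
    · rw [if_pos hR] at h
      obtain ⟨h1, h2⟩ := R_add_eq_nil.1 hR
      rw [List.mem_singleton] at h
      exact ⟨G.ra, ra_mem_atomList h1, X.ra, ra_mem_atomList h2, by rw [h, ra_add]⟩
    · rw [if_neg hR] at h
      obtain ⟨l', hl', hsl⟩ := List.mem_flatten.1 h
      obtain ⟨y, hy, rfl⟩ := List.mem_map.1 hl'
      rcases mem_R_add.1 hy with ⟨z, hz, rfl⟩ | ⟨z, hz, rfl⟩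
      · obtain ⟨u, hu, v, hv, he⟩ := mem_atomList_add hsl
        exact ⟨u, mem_atomList_R hz hu, v, hv, he⟩
      · obtain ⟨u, hu, v, hv, he⟩ := mem_atomList_add hsl
        exact ⟨u, hu, v, mem_atomList_R hz hv, he⟩
termination_by sizeOf G + sizeOf X
decreasing_by
  · have := sizeOf_lt_L hz; omega
  · have := sizeOf_lt_L hz; omega
  · have := sizeOf_lt_R hz; omega
  · have := sizeOf_lt_R hz; omega

theorem guaranteed_add {G X : SG} (hG : G.Guaranteed) (hX : X.Guaranteed) :
    (G.add X).Guaranteed := by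
  rw [guaranteed_def]
  refine ⟨?_, ?_, ?_, ?_⟩
  · intro y hy
    rcases mem_L_add.1 hy with ⟨z, hz, rfl⟩ | ⟨z, hz, rfl⟩
    · exact guaranteed_add (hG.memL hz) hX
    · exact guaranteed_add hG (hX.memL hz)
  · intro y hy
    rcases mem_R_add.1 hy with ⟨z, hz, rfl⟩ | ⟨z, hz, rfl⟩
    · exact guaranteed_add (hG.memR hz) hX
    · exact guaranteed_add hG (hX.memR hz)
  · intro h s hs
    obtain ⟨h1, h2⟩ := L_add_eq_nil.1 h
    obtain ⟨u, hu, v, hv, rfl⟩ := mem_atomList_add hs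
    rw [la_add]
    exact add_le_add (hG.atomL h1 u hu) (hX.atomL h2 v hv)
  · intro h s hs
    obtain ⟨h1, h2⟩ := R_add_eq_nil.1 h
    obtain ⟨u, hu, v, hv, rfl⟩ := mem_atomList_add hs
    rw [ra_add]
    exact add_le_add (hG.atomR h1 u hu) (hX.atomR h2 v hv)
termination_by sizeOf G + sizeOf X
decreasing_by
  · have := sizeOf_lt_L hz; omega
  · have := sizeOf_lt_L hz; omega
  · have := sizeOf_lt_R hz; omega
  · have := sizeOf_lt_R hz; omega

-- ===== Phase 3: numbers, waiting chains, translation =====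

@[simp] theorem L_mk (a b : ℝ) (l r : List SG) : (mk a b l r).L = l := rfl
@[simp] theorem R_mk (a b : ℝ) (l r : List SG) : (mk a b l r).R = r := rfl
@[simp] theorem la_mk (a b : ℝ) (l r : List SG) : (mk a b l r).la = a := rfl
@[simp] theorem ra_mk (a b : ℝ) (l r : List SG) : (mk a b l r).ra = b := rfl

theorem max_shift {l : List ℝ} (h : l ≠ []) (s : ℝ) :
    (WithBot.unbotD 0 (l.map (· + s)).maximum) = WithBot.unbotD 0 l.maximum + s := by
  refine le_antisymm (max_unbot_le 0 (by simpa using h) ?_) ?_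
  · rintro y hy
    obtain ⟨x, hx, rfl⟩ := List.mem_map.1 hy
    exact add_le_add_left (le_max_unbot 0 hx) s
  · exact le_max_unbot 0 (List.mem_map_of_mem (max_unbot_mem 0 h))

theorem min_shift {l : List ℝ} (h : l ≠ []) (s : ℝ) :
    (WithTop.untopD 0 (l.map (· + s)).minimum) = WithTop.untopD 0 l.minimum + s := by
  refine le_antisymm ?_ (le_min_untop 0 (by simpa using h) ?_)
  · exact min_untop_le 0 (l := l.map (· + s)) (List.mem_map_of_mem (min_untop_mem 0 h))
  · rintro y hy
    obtain ⟨x, hx, rfl⟩ := List.mem_map.1 hy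
    exact add_le_add_left (min_untop_le 0 hx) s

/-- Right-waiting chain with atoms `s`. -/
def Wc (s : ℝ) : ℕ → SG
  | 0 => mk s s [] []
  | n+1 => mk s s [] [Wc s n]

/-- Left-waiting chain with atoms `s`. -/
def Mc (s : ℝ) : ℕ → SG
  | 0 => mk s s [] []
  | n+1 => mk s s [Mc s n] []

@[simp] theorem Wc_L (s : ℝ) (n : ℕ) : (Wc s n).L = [] := by cases n <;> rfl
@[simp] theorem Mc_R (s : ℝ) (n : ℕ) : (Mc s n).R = [] := by cases n <;> rfl
@[simp] theorem Wc_la (s : ℝ) (n : ℕ) : (Wc s n).la = s := by cases n <;> rfl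
@[simp] theorem Wc_ra (s : ℝ) (n : ℕ) : (Wc s n).ra = s := by cases n <;> rfl
@[simp] theorem Mc_la (s : ℝ) (n : ℕ) : (Mc s n).la = s := by cases n <;> rfl
@[simp] theorem Mc_ra (s : ℝ) (n : ℕ) : (Mc s n).ra = s := by cases n <;> rfl
theorem Wc_R_zero (s : ℝ) : (Wc s 0).R = [] := rfl
theorem Wc_R_succ (s : ℝ) (n : ℕ) : (Wc s (n+1)).R = [Wc s n] := rfl
theorem Mc_L_zero (s : ℝ) : (Mc s 0).L = [] := rfl
theorem Mc_L_succ (s : ℝ) (n : ℕ) : (Mc s (n+1)).L = [Mc s n] := rfl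

theorem conj_mk (a b : ℝ) (l r : List SG) :
    conj (mk a b l r) = mk (-b) (-a) (r.map conj) (l.map conj) := by
  rw [conj]; simp

theorem conj_wait_eq_Wc (n : ℕ) : conj (wait n) = Wc 0 n := by
  induction n with
  | zero => show conj (mk 0 0 [] []) = _; rw [conj_mk]; simp [Wc]
  | succ m ih => show conj (mk 0 0 [wait m] []) = _; rw [conj_mk]; simp [Wc, ih]

theorem wait_eq_Mc (n : ℕ) : wait n = Mc 0 n := by
  induction n with
  | zero => rfl
  | succ m ih => show mk 0 0 [wait m] [] = _; rw [ih]; rfl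

theorem atomList_Wc_zero (s : ℝ) : (Wc s 0).atomList = [s, s] := by
  rw [atomList_def]; simp [Wc_R_zero]

theorem atomList_Wc_succ (s : ℝ) (n : ℕ) :
    (Wc s (n+1)).atomList = s :: (Wc s n).atomList := by
  rw [atomList_def]; simp [Wc_R_succ]

theorem atomList_Mc_zero (s : ℝ) : (Mc s 0).atomList = [s, s] := by
  rw [atomList_def]; simp [Mc_L_zero]

theorem atomList_Mc_succ (s : ℝ) (n : ℕ) :
    (Mc s (n+1)).atomList = (Mc s n).atomList ++ [s] := by
  rw [atomList_def]; simp [Mc_L_succ]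

theorem mem_atomList_Wc {s x : ℝ} {n : ℕ} (h : x ∈ (Wc s n).atomList) : x = s := by
  induction n with
  | zero => rw [atomList_Wc_zero] at h; simpa using h
  | succ m ih =>
    rw [atomList_Wc_succ] at h
    rcases List.mem_cons.1 h with h | h
    · exact h
    · exact ih h

theorem mem_atomList_Mc {s x : ℝ} {n : ℕ} (h : x ∈ (Mc s n).atomList) : x = s := by
  induction n with
  | zero => rw [atomList_Mc_zero] at h; simpa using h
  | succ m ih =>
    rw [atomList_Mc_succ] at h
    rcases List.mem_append.1 h with h | h
    · exact ih h
    · simp at h; exact h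

theorem guaranteed_Wc (s : ℝ) (n : ℕ) : (Wc s n).Guaranteed := by
  induction n with
  | zero =>
    rw [guaranteed_def]
    refine ⟨by simp, by simp [Wc_R_zero], ?_, ?_⟩ <;>
      exact fun _ t ht => le_of_eq (by simp [mem_atomList_Wc (n := 0) ht])
  | succ m ih =>
    rw [guaranteed_def]
    refine ⟨by simp, ?_, ?_, by simp [Wc_R_succ]⟩
    · intro x hx
      rw [Wc_R_succ] at hx
      simp at hx
      rw [hx]; exact ih
    · exact fun _ t ht => le_of_eq (by simp [mem_atomList_Wc (n := m+1) ht])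

theorem guaranteed_Mc (s : ℝ) (n : ℕ) : (Mc s n).Guaranteed := by
  induction n with
  | zero =>
    rw [guaranteed_def]
    refine ⟨by simp [Mc_L_zero], by simp, ?_, ?_⟩ <;>
      exact fun _ t ht => le_of_eq (by simp [mem_atomList_Mc (n := 0) ht])
  | succ m ih =>
    rw [guaranteed_def]
    refine ⟨?_, by simp, by simp [Mc_L_succ], ?_⟩
    · intro x hx
      rw [Mc_L_succ] at hx
      simp at hx
      rw [hx]; exact ih
    · exact fun _ t ht => le_of_eq (by simp [mem_atomList_Mc (n := m+1) ht])

theorem guaranteed_num (s : ℝ) : (num s).Guaranteed := guaranteed_Wc s 0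

theorem guaranteed_wait (n : ℕ) : (wait n).Guaranteed := by
  rw [wait_eq_Mc]; exact guaranteed_Mc 0 n

theorem guaranteed_conj_wait (n : ℕ) : (conj (wait n)).Guaranteed := by
  rw [conj_wait_eq_Wc]; exact guaranteed_Wc 0 n

@[simp] theorem num_L (s : ℝ) : (num s).L = [] := rfl
@[simp] theorem num_R (s : ℝ) : (num s).R = [] := rfl
@[simp] theorem num_la (s : ℝ) : (num s).la = s := rfl
@[simp] theorem num_ra (s : ℝ) : (num s).ra = s := rfl

theorem stops_add_num (G : SG) (s : ℝ) :
    Ls (G.add (num s)) = Ls G + s ∧ Rs (G.add (num s)) = Rs G + s := by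
  constructor
  · by_cases h : G.L = []
    · rw [Ls_of_nil (L_add_eq_nil.2 ⟨h, num_L s⟩), Ls_of_nil h, la_add, num_la]
    · have hne : (G.add (num s)).L ≠ [] := fun hc => h (L_add_eq_nil.1 hc).1
      rw [Ls_def, if_neg hne, Ls_def, if_neg h]
      have hl : ((G.add (num s)).L.map Rs) = (G.L.map Rs).map (· + s) := by
        rw [L_add]
        simp only [num_L, List.map_nil, List.append_nil, List.map_map]
        exact List.map_congr_left fun g hg => (stops_add_num g s).2
      rw [hl, max_shift (by simpa using h)]
  · by_cases h : G.R = []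
    · rw [Rs_of_nil (R_add_eq_nil.2 ⟨h, num_R s⟩), Rs_of_nil h, ra_add, num_ra]
    · have hne : (G.add (num s)).R ≠ [] := fun hc => h (R_add_eq_nil.1 hc).1
      rw [Rs_def, if_neg hne, Rs_def, if_neg h]
      have hl : ((G.add (num s)).R.map Ls) = (G.R.map Ls).map (· + s) := by
        rw [R_add]
        simp only [num_R, List.map_nil, List.append_nil, List.map_map]
        exact List.map_congr_left fun g hg => (stops_add_num g s).1
      rw [hl, min_shift (by simpa using h)]
termination_by sizeOf G
decreasing_by exacts [sizeOf_lt_L hg, sizeOf_lt_R hg]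

theorem Ls_add_num (G : SG) (s : ℝ) : Ls (G.add (num s)) = Ls G + s := (stops_add_num G s).1
theorem Rs_add_num (G : SG) (s : ℝ) : Rs (G.add (num s)) = Rs G + s := (stops_add_num G s).2

theorem stops_add_Wc (G : SG) (s : ℝ) (n : ℕ) :
    Ls (G.add (Wc s n)) = Ls (G.add (Wc 0 n)) + s ∧
    Rs (G.add (Wc s n)) = Rs (G.add (Wc 0 n)) + s := by
  constructor
  · by_cases h : G.L = []
    · rw [Ls_of_nil (L_add_eq_nil.2 ⟨h, Wc_L s n⟩), Ls_of_nil (L_add_eq_nil.2 ⟨h, Wc_L 0 n⟩),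
        la_add, la_add, Wc_la, Wc_la, add_zero]
    · have hne : (G.add (Wc s n)).L ≠ [] := fun hc => h (L_add_eq_nil.1 hc).1
      have hne0 : (G.add (Wc 0 n)).L ≠ [] := fun hc => h (L_add_eq_nil.1 hc).1
      rw [Ls_def, if_neg hne, Ls_def, if_neg hne0]
      have hl : ((G.add (Wc s n)).L.map Rs) = ((G.add (Wc 0 n)).L.map Rs).map (· + s) := by
        rw [L_add, L_add]
        simp only [Wc_L, List.map_nil, List.append_nil, List.map_map]
        exact List.map_congr_left fun g hg => (stops_add_Wc g s n).2
      rw [hl, max_shift (by simpa using hne0)]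
  · cases n with
    | zero =>
      by_cases h : G.R = []
      · rw [Rs_of_nil (R_add_eq_nil.2 ⟨h, Wc_R_zero s⟩), Rs_of_nil (R_add_eq_nil.2 ⟨h, Wc_R_zero 0⟩),
          ra_add, ra_add, Wc_ra, Wc_ra, add_zero]
      · have hne : (G.add (Wc s 0)).R ≠ [] := fun hc => h (R_add_eq_nil.1 hc).1
        have hne0 : (G.add (Wc 0 0)).R ≠ [] := fun hc => h (R_add_eq_nil.1 hc).1
        rw [Rs_def, if_neg hne, Rs_def, if_neg hne0]
        have hl : ((G.add (Wc s 0)).R.map Ls) = ((G.add (Wc 0 0)).R.map Ls).map (· + s) := by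
          rw [R_add, R_add]
          simp only [Wc_R_zero, List.map_nil, List.append_nil, List.map_map]
          exact List.map_congr_left fun g hg => (stops_add_Wc g s 0).1
        rw [hl, min_shift (by simpa using hne0)]
    | succ m =>
      have hne : (G.add (Wc s (m+1))).R ≠ [] := by
        intro hc
        have := (R_add_eq_nil.1 hc).2
        rw [Wc_R_succ] at this
        exact List.cons_ne_nil _ _ this
      have hne0 : (G.add (Wc 0 (m+1))).R ≠ [] := by
        intro hc
        have := (R_add_eq_nil.1 hc).2
        rw [Wc_R_succ] at this
        exact List.cons_ne_nil _ _ this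
      rw [Rs_def, if_neg hne, Rs_def, if_neg hne0]
      have hl : ((G.add (Wc s (m+1))).R.map Ls) = ((G.add (Wc 0 (m+1))).R.map Ls).map (· + s) := by
        rw [R_add, R_add, Wc_R_succ, Wc_R_succ]
        simp only [List.map_append, List.map_map, List.map_cons, List.map_nil,
          Function.comp_def]
        congr 1
        · exact List.map_congr_left fun g hg => (stops_add_Wc g s (m+1)).1
        · simp [(stops_add_Wc G s m).1]
      rw [hl, min_shift (by simpa using hne0)]
termination_by sizeOf G + n
decreasing_by all_goals
  (first | (have := sizeOf_lt_L hg; omega) | (have := sizeOf_lt_R hg; omega) | omega)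

theorem stops_add_Mc (G : SG) (s : ℝ) (n : ℕ) :
    Ls (G.add (Mc s n)) = Ls (G.add (Mc 0 n)) + s ∧
    Rs (G.add (Mc s n)) = Rs (G.add (Mc 0 n)) + s := by
  constructor
  · cases n with
    | zero =>
      by_cases h : G.L = []
      · rw [Ls_of_nil (L_add_eq_nil.2 ⟨h, Mc_L_zero s⟩), Ls_of_nil (L_add_eq_nil.2 ⟨h, Mc_L_zero 0⟩),
          la_add, la_add, Mc_la, Mc_la, add_zero]
      · have hne : (G.add (Mc s 0)).L ≠ [] := fun hc => h (L_add_eq_nil.1 hc).1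
        have hne0 : (G.add (Mc 0 0)).L ≠ [] := fun hc => h (L_add_eq_nil.1 hc).1
        rw [Ls_def, if_neg hne, Ls_def, if_neg hne0]
        have hl : ((G.add (Mc s 0)).L.map Rs) = ((G.add (Mc 0 0)).L.map Rs).map (· + s) := by
          rw [L_add, L_add]
          simp only [Mc_L_zero, List.map_nil, List.append_nil, List.map_map]
          exact List.map_congr_left fun g hg => (stops_add_Mc g s 0).2
        rw [hl, max_shift (by simpa using hne0)]
    | succ m =>
      have hne : (G.add (Mc s (m+1))).L ≠ [] := by
        intro hc
        have := (L_add_eq_nil.1 hc).2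
        rw [Mc_L_succ] at this
        exact List.cons_ne_nil _ _ this
      have hne0 : (G.add (Mc 0 (m+1))).L ≠ [] := by
        intro hc
        have := (L_add_eq_nil.1 hc).2
        rw [Mc_L_succ] at this
        exact List.cons_ne_nil _ _ this
      rw [Ls_def, if_neg hne, Ls_def, if_neg hne0]
      have hl : ((G.add (Mc s (m+1))).L.map Rs) = ((G.add (Mc 0 (m+1))).L.map Rs).map (· + s) := by
        rw [L_add, L_add, Mc_L_succ, Mc_L_succ]
        simp only [List.map_append, List.map_map, List.map_cons, List.map_nil,
          Function.comp_def]
        congr 1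
        · exact List.map_congr_left fun g hg => (stops_add_Mc g s (m+1)).2
        · simp [(stops_add_Mc G s m).2]
      rw [hl, max_shift (by simpa using hne0)]
  · by_cases h : G.R = []
    · rw [Rs_of_nil (R_add_eq_nil.2 ⟨h, Mc_R s n⟩), Rs_of_nil (R_add_eq_nil.2 ⟨h, Mc_R 0 n⟩),
        ra_add, ra_add, Mc_ra, Mc_ra, add_zero]
    · have hne : (G.add (Mc s n)).R ≠ [] := fun hc => h (R_add_eq_nil.1 hc).1
      have hne0 : (G.add (Mc 0 n)).R ≠ [] := fun hc => h (R_add_eq_nil.1 hc).1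
      rw [Rs_def, if_neg hne, Rs_def, if_neg hne0]
      have hl : ((G.add (Mc s n)).R.map Ls) = ((G.add (Mc 0 n)).R.map Ls).map (· + s) := by
        rw [R_add, R_add]
        simp only [Mc_R, List.map_nil, List.append_nil, List.map_map]
        exact List.map_congr_left fun g hg => (stops_add_Mc g s n).1
      rw [hl, min_shift (by simpa using hne0)]
termination_by sizeOf G + n
decreasing_by all_goals
  (first | (have := sizeOf_lt_L hg; omega) | (have := sizeOf_lt_R hg; omega) | omega)

theorem Ls_add_Wc (G : SG) (s : ℝ) (n : ℕ) :
    Ls (G.add (Wc s n)) = Ls (G.add (conj (wait n))) + s := by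
  rw [conj_wait_eq_Wc]; exact (stops_add_Wc G s n).1

theorem Rs_add_Wc (G : SG) (s : ℝ) (n : ℕ) :
    Rs (G.add (Wc s n)) = Rs (G.add (conj (wait n))) + s := by
  rw [conj_wait_eq_Wc]; exact (stops_add_Wc G s n).2

theorem Ls_add_Mc (G : SG) (s : ℝ) (n : ℕ) :
    Ls (G.add (Mc s n)) = Ls (G.add (wait n)) + s := by
  rw [wait_eq_Mc]; exact (stops_add_Mc G s n).1

theorem Rs_add_Mc (G : SG) (s : ℝ) (n : ℕ) :
    Rs (G.add (Mc s n)) = Rs (G.add (wait n)) + s := by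
  rw [wait_eq_Mc]; exact (stops_add_Mc G s n).2

theorem minAtom_le {G : SG} {s : ℝ} (h : s ∈ G.atomList) : G.minAtom ≤ s := min_untop_le 0 h
theorem le_maxAtom {G : SG} {s : ℝ} (h : s ∈ G.atomList) : s ≤ G.maxAtom := le_max_unbot 0 h

theorem minAtom_le_Ls_add_cw (G : SG) (n : ℕ) : G.minAtom ≤ Ls (G.add (conj (wait n))) := by
  rw [conj_wait_eq_Wc]
  obtain ⟨u, hu, v, hv, he⟩ := mem_atomList_add (stops_mem_atomList (G.add (Wc 0 n))).1
  rw [he, mem_atomList_Wc hv, add_zero]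
  exact minAtom_le hu

theorem Rs_add_w_le_maxAtom (G : SG) (n : ℕ) : Rs (G.add (wait n)) ≤ G.maxAtom := by
  rw [wait_eq_Mc]
  obtain ⟨u, hu, v, hv, he⟩ := mem_atomList_add (stops_mem_atomList (G.add (Mc 0 n))).2
  rw [he, mem_atomList_Mc hv, add_zero]
  exact le_maxAtom hu

theorem lsU_bdd (G : SG) : BddBelow (Set.range fun n => Ls (G.add (conj (wait n)))) := by
  refine ⟨G.minAtom, ?_⟩
  rintro y ⟨n, rfl⟩
  exact minAtom_le_Ls_add_cw G n

theorem rsO_bdd (G : SG) : BddAbove (Set.range fun n => Rs (G.add (wait n))) := by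
  refine ⟨G.maxAtom, ?_⟩
  rintro y ⟨n, rfl⟩
  exact Rs_add_w_le_maxAtom G n

theorem lsU_le (G : SG) (n : ℕ) : lsU G ≤ Ls (G.add (conj (wait n))) :=
  ciInf_le (lsU_bdd G) n

theorem le_lsU {G : SG} {c : ℝ} (h : ∀ n, c ≤ Ls (G.add (conj (wait n)))) : c ≤ lsU G :=
  le_ciInf h

theorem exists_lsU_lt {G : SG} {t : ℝ} (h : lsU G < t) :
    ∃ n, Ls (G.add (conj (wait n))) < t :=
  exists_lt_of_ciInf_lt h

theorem le_rsO (G : SG) (n : ℕ) : Rs (G.add (wait n)) ≤ rsO G :=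
  le_ciSup (rsO_bdd G) n

theorem rsO_le {G : SG} {c : ℝ} (h : ∀ n, Rs (G.add (wait n)) ≤ c) : rsO G ≤ c :=
  ciSup_le h

theorem exists_lt_rsO {G : SG} {t : ℝ} (h : t < rsO G) :
    ∃ n, t < Rs (G.add (wait n)) :=
  exists_lt_of_lt_ciSup h

theorem lsU_of_nil {G : SG} (h : G.L = []) : lsU G = G.la := by
  have hc : ∀ n : ℕ, Ls (G.add (conj (wait n))) = G.la := by
    intro n
    rw [conj_wait_eq_Wc, Ls_of_nil (L_add_eq_nil.2 ⟨h, Wc_L 0 n⟩), la_add, Wc_la, add_zero]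
  unfold lsU
  simp_rw [hc]
  exact ciInf_const

theorem rsO_of_nil {G : SG} (h : G.R = []) : rsO G = G.ra := by
  have hc : ∀ n : ℕ, Rs (G.add (wait n)) = G.ra := by
    intro n
    rw [wait_eq_Mc, Rs_of_nil (R_add_eq_nil.2 ⟨h, Mc_R 0 n⟩), ra_add, Mc_ra, add_zero]
  unfold rsO
  simp_rw [hc]
  exact ciSup_const

-- ===== Phase 4: pass lemmas =====

theorem birthday_def (G : SG) : G.birthday =
    max (WithBot.unbotD 0 (G.L.map (fun x => birthday x + 1)).maximum)
        (WithBot.unbotD 0 (G.R.map (fun x => birthday x + 1)).maximum) := by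
  cases G with | mk a b ls rs =>
  rw [birthday]
  simp [L, R]

theorem birthday_lt_L {G x : SG} (h : x ∈ G.L) : x.birthday < G.birthday := by
  have h1 : x.birthday + 1 ≤ WithBot.unbotD 0 (G.L.map (fun y => birthday y + 1)).maximum :=
    le_max_unbot 0 (List.mem_map_of_mem h)
  have h2 : WithBot.unbotD 0 (G.L.map (fun y => birthday y + 1)).maximum ≤ G.birthday := by
    rw [birthday_def]; exact le_max_left _ _
  omega

theorem birthday_lt_R {G x : SG} (h : x ∈ G.R) : x.birthday < G.birthday := by
  have h1 : x.birthday + 1 ≤ WithBot.unbotD 0 (G.R.map (fun y => birthday y + 1)).maximum :=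
    le_max_unbot 0 (List.mem_map_of_mem h)
  have h2 : WithBot.unbotD 0 (G.R.map (fun y => birthday y + 1)).maximum ≤ G.birthday := by
    rw [birthday_def]; exact le_max_right _ _
  omega

theorem pass_left_aux (N : ℕ) (G X : SG) (hG : G.Guaranteed) (hX : X.Guaranteed) {m : ℝ}
    (hm : ∀ s ∈ X.atomList, m ≤ s) (hb : X.birthday ≤ N) :
    Ls (G.add (Wc 0 N)) + m ≤ Ls (G.add X) ∧
    Rs (G.add (Wc 0 N)) + m ≤ Rs (G.add X) := by
  constructor
  · -- Left stops
    by_cases hGL : G.L = []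
    · by_cases hXL : X.L = []
      · rw [Ls_of_nil (L_add_eq_nil.2 ⟨hGL, Wc_L 0 N⟩), Ls_of_nil (L_add_eq_nil.2 ⟨hGL, hXL⟩),
          la_add, la_add, Wc_la, add_zero]
        exact add_le_add_right (hm _ (la_mem_atomList hXL)) _
      · -- Left must move in X
        obtain ⟨x, hx⟩ := List.exists_mem_of_ne_nil _ hXL
        obtain ⟨N', rfl⟩ : ∃ N', N = N' + 1 := by
          have h1 := birthday_lt_L hx
          cases N with
          | zero => omega
          | succ k => exact ⟨k, rfl⟩
        rw [Ls_of_nil (L_add_eq_nil.2 ⟨hGL, Wc_L 0 _⟩), la_add, Wc_la, add_zero]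
        have hIH := (pass_left_aux N' G x hG (hX.memL hx)
          (fun s hs => hm s (mem_atomList_L hx hs))
          (by have := birthday_lt_L hx; omega)).2
        have h2 : G.la ≤ Rs (G.add (Wc 0 N')) := by
          obtain ⟨u, hu, v, hv, he⟩ := mem_atomList_add (stops_mem_atomList (G.add (Wc 0 N'))).2
          rw [he, mem_atomList_Wc hv, add_zero]
          exact hG.atomL hGL u hu
        have h3 : Rs (G.add x) ≤ Ls (G.add X) :=
          Rs_le_Ls_of_mem (mem_L_add.2 (Or.inr ⟨x, hx, rfl⟩))
        linarith
    · -- realize the max on the c_N side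
      have hne : (G.add (Wc 0 N)).L ≠ [] := fun hc => hGL (L_add_eq_nil.1 hc).1
      obtain ⟨y, hy, he⟩ := exists_Ls hne
      rw [he]
      rcases mem_L_add.1 hy with ⟨g, hg, rfl⟩ | ⟨z, hz, rfl⟩
      · have hIH := (pass_left_aux N g X (hG.memL hg) hX hm hb).2
        have h3 : Rs (g.add X) ≤ Ls (G.add X) :=
          Rs_le_Ls_of_mem (mem_L_add.2 (Or.inl ⟨g, hg, rfl⟩))
        linarith
      · rw [Wc_L] at hz; exact absurd hz (List.not_mem_nil)
  · -- Right stops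
    by_cases hXR : X.R = []
    · by_cases hGR : G.R = []
      · rw [Rs_of_nil (R_add_eq_nil.2 ⟨hGR, hXR⟩), ra_add]
        have h1 : m ≤ X.ra := hm _ (ra_mem_atomList hXR)
        have h2 : Rs (G.add (Wc 0 N)) ≤ G.ra := by
          obtain ⟨u, hu, v, hv, he⟩ := mem_atomList_add (stops_mem_atomList (G.add (Wc 0 N))).2
          rw [he, mem_atomList_Wc hv, add_zero]
          exact hG.atomR hGR u hu
        linarith
      · have hne : (G.add X).R ≠ [] := fun hc => hGR (R_add_eq_nil.1 hc).1
        refine le_Rs hne ?_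
        intro y hy
        rcases mem_R_add.1 hy with ⟨g, hg, rfl⟩ | ⟨z, hz, rfl⟩
        · have hIH := (pass_left_aux N g X (hG.memR hg) hX hm hb).1
          have h3 : Rs (G.add (Wc 0 N)) ≤ Ls (g.add (Wc 0 N)) :=
            Rs_le_Ls_of_memR (mem_R_add.2 (Or.inl ⟨g, hg, rfl⟩))
          linarith
        · exact absurd hz (by rw [hXR]; exact List.not_mem_nil)
    · have hne : (G.add X).R ≠ [] := by
        intro hc; exact hXR (R_add_eq_nil.1 hc).2
      refine le_Rs hne ?_
      intro y hy
      rcases mem_R_add.1 hy with ⟨g, hg, rfl⟩ | ⟨x, hx, rfl⟩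
      · have hIH := (pass_left_aux N g X (hG.memR hg) hX hm hb).1
        have h3 : Rs (G.add (Wc 0 N)) ≤ Ls (g.add (Wc 0 N)) :=
          Rs_le_Ls_of_memR (mem_R_add.2 (Or.inl ⟨g, hg, rfl⟩))
        linarith
      · obtain ⟨N', rfl⟩ : ∃ N', N = N' + 1 := by
          have h1 := birthday_lt_R hx
          cases N with
          | zero => omega
          | succ k => exact ⟨k, rfl⟩
        have hIH := (pass_left_aux N' G x hG (hX.memR hx)
          (fun s hs => hm s (mem_atomList_R hx hs))
          (by have := birthday_lt_R hx; omega)).1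
        have h3 : Rs (G.add (Wc 0 (N' + 1))) ≤ Ls (G.add (Wc 0 N')) := by
          refine Rs_le_Ls_of_memR (mem_R_add.2 (Or.inr ⟨Wc 0 N', ?_, rfl⟩))
          rw [Wc_R_succ]; exact List.mem_singleton_self _
        linarith
termination_by sizeOf G + sizeOf X
decreasing_by all_goals
  (first | (have := sizeOf_lt_L hx; omega) | (have := sizeOf_lt_L hg; omega) |
    (have := sizeOf_lt_R hg; omega) | (have := sizeOf_lt_R hx; omega))

theorem pass_right_aux (N : ℕ) (G X : SG) (hG : G.Guaranteed) (hX : X.Guaranteed) {m : ℝ}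
    (hm : ∀ s ∈ X.atomList, s ≤ m) (hb : X.birthday ≤ N) :
    Ls (G.add X) ≤ Ls (G.add (Mc 0 N)) + m ∧
    Rs (G.add X) ≤ Rs (G.add (Mc 0 N)) + m := by
  constructor
  · by_cases hXL : X.L = []
    · by_cases hGL : G.L = []
      · rw [Ls_of_nil (L_add_eq_nil.2 ⟨hGL, hXL⟩), la_add]
        have h1 : X.la ≤ m := hm _ (la_mem_atomList hXL)
        have h2 : G.la ≤ Ls (G.add (Mc 0 N)) := by
          obtain ⟨u, hu, v, hv, he⟩ := mem_atomList_add (stops_mem_atomList (G.add (Mc 0 N))).1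
          rw [he, mem_atomList_Mc hv, add_zero]
          exact hG.atomL hGL u hu
        linarith
      · have hne : (G.add X).L ≠ [] := fun hc => hGL (L_add_eq_nil.1 hc).1
        refine Ls_le hne ?_
        intro y hy
        rcases mem_L_add.1 hy with ⟨g, hg, rfl⟩ | ⟨z, hz, rfl⟩
        · have hIH := (pass_right_aux N g X (hG.memL hg) hX hm hb).2
          have h3 : Rs (g.add (Mc 0 N)) ≤ Ls (G.add (Mc 0 N)) :=
            Rs_le_Ls_of_mem (mem_L_add.2 (Or.inl ⟨g, hg, rfl⟩))
          linarith
        · exact absurd hz (by rw [hXL]; exact List.not_mem_nil)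
    · have hne : (G.add X).L ≠ [] := fun hc => hXL (L_add_eq_nil.1 hc).2
      refine Ls_le hne ?_
      intro y hy
      rcases mem_L_add.1 hy with ⟨g, hg, rfl⟩ | ⟨x, hx, rfl⟩
      · have hIH := (pass_right_aux N g X (hG.memL hg) hX hm hb).2
        have h3 : Rs (g.add (Mc 0 N)) ≤ Ls (G.add (Mc 0 N)) :=
          Rs_le_Ls_of_mem (mem_L_add.2 (Or.inl ⟨g, hg, rfl⟩))
        linarith
      · obtain ⟨N', rfl⟩ : ∃ N', N = N' + 1 := by
          have h1 := birthday_lt_L hx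
          cases N with
          | zero => omega
          | succ k => exact ⟨k, rfl⟩
        have hIH := (pass_right_aux N' G x hG (hX.memL hx)
          (fun s hs => hm s (mem_atomList_L hx hs))
          (by have := birthday_lt_L hx; omega)).2
        have h3 : Rs (G.add (Mc 0 N')) ≤ Ls (G.add (Mc 0 (N' + 1))) := by
          refine Rs_le_Ls_of_mem (mem_L_add.2 (Or.inr ⟨Mc 0 N', ?_, rfl⟩))
          rw [Mc_L_succ]; exact List.mem_singleton_self _
        linarith
  · by_cases hGR : G.R = []
    · by_cases hXR : X.R = []
      · rw [Rs_of_nil (R_add_eq_nil.2 ⟨hGR, Mc_R 0 N⟩), Rs_of_nil (R_add_eq_nil.2 ⟨hGR, hXR⟩),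
          ra_add, ra_add, Mc_ra, add_zero]
        exact add_le_add_right (hm _ (ra_mem_atomList hXR)) _
      · obtain ⟨x, hx⟩ := List.exists_mem_of_ne_nil _ hXR
        obtain ⟨N', rfl⟩ : ∃ N', N = N' + 1 := by
          have h1 := birthday_lt_R hx
          cases N with
          | zero => omega
          | succ k => exact ⟨k, rfl⟩
        rw [Rs_of_nil (R_add_eq_nil.2 ⟨hGR, Mc_R 0 _⟩), ra_add, Mc_ra, add_zero]
        have hIH := (pass_right_aux N' G x hG (hX.memR hx)
          (fun s hs => hm s (mem_atomList_R hx hs))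
          (by have := birthday_lt_R hx; omega)).1
        have h2 : Ls (G.add (Mc 0 N')) ≤ G.ra := by
          obtain ⟨u, hu, v, hv, he⟩ := mem_atomList_add (stops_mem_atomList (G.add (Mc 0 N'))).1
          rw [he, mem_atomList_Mc hv, add_zero]
          exact hG.atomR hGR u hu
        have h3 : Rs (G.add X) ≤ Ls (G.add x) :=
          Rs_le_Ls_of_memR (mem_R_add.2 (Or.inr ⟨x, hx, rfl⟩))
        linarith
    · have hne : (G.add (Mc 0 N)).R ≠ [] := fun hc => hGR (R_add_eq_nil.1 hc).1
      obtain ⟨y, hy, he⟩ := exists_Rs hne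
      rw [he]
      rcases mem_R_add.1 hy with ⟨g, hg, rfl⟩ | ⟨z, hz, rfl⟩
      · have hIH := (pass_right_aux N g X (hG.memR hg) hX hm hb).1
        have h3 : Rs (G.add X) ≤ Ls (g.add X) :=
          Rs_le_Ls_of_memR (mem_R_add.2 (Or.inl ⟨g, hg, rfl⟩))
        linarith
      · rw [Mc_R] at hz; exact absurd hz (List.not_mem_nil)
termination_by sizeOf G + sizeOf X
decreasing_by all_goals
  (first | (have := sizeOf_lt_L hx; omega) | (have := sizeOf_lt_L hg; omega) |
    (have := sizeOf_lt_R hg; omega) | (have := sizeOf_lt_R hx; omega))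

theorem pass_left' {G X : SG} (hG : G.Guaranteed) (hX : X.Guaranteed) (hXL : X.L = []) :
    lsU G + X.la ≤ Ls (G.add X) := by
  have h1 := (pass_left_aux X.birthday G X hG hX (hX.atomL hXL) le_rfl).1
  have h2 := lsU_le G X.birthday
  rw [← conj_wait_eq_Wc] at h1
  linarith

theorem pass_right' {G X : SG} (hG : G.Guaranteed) (hX : X.Guaranteed) (hXR : X.R = []) :
    Rs (G.add X) ≤ rsO G + X.ra := by
  have h1 := (pass_right_aux X.birthday G X hG hX (hX.atomR hXR) le_rfl).2
  have h2 := le_rsO G X.birthday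
  rw [← wait_eq_Mc] at h1
  linarith

-- ===== Phase 5: sufficiency =====

theorem ge_aux {G H : SG} (hG : G.Guaranteed) (hH : H.Guaranteed)
    (h1l : lsU H ≤ lsU G) (h1r : rsO H ≤ rsO G)
    (h2 : ∀ Hl ∈ H.L, (∃ Gl ∈ G.L, Gl.Ge Hl) ∨ (∃ Hlr ∈ Hl.R, G.Ge Hlr))
    (h3 : ∀ Gr ∈ G.R, (∃ Hr ∈ H.R, Gr.Ge Hr) ∨ (∃ Grl ∈ Gr.L, Grl.Ge H))
    (X : SG) (hX : X.Guaranteed) :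
    Ls (H.add X) ≤ Ls (G.add X) ∧ Rs (H.add X) ≤ Rs (G.add X) := by
  constructor
  · by_cases hHX : (H.add X).L = []
    · obtain ⟨hHL, hXL⟩ := L_add_eq_nil.1 hHX
      rw [Ls_of_nil hHX, la_add]
      have e1 : H.la = lsU H := (lsU_of_nil hHL).symm
      have e2 := pass_left' hG hX hXL
      linarith
    · refine Ls_le hHX ?_
      intro y hy
      rcases mem_L_add.1 hy with ⟨Hl, hHl, rfl⟩ | ⟨Xl, hXl, rfl⟩
      · rcases h2 Hl hHl with ⟨Gl, hGl, hge⟩ | ⟨Hlr, hHlr, hge⟩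
        · have e1 : Rs (Hl.add X) ≤ Rs (Gl.add X) := (hge X hX).2
          have e2 : Rs (Gl.add X) ≤ Ls (G.add X) :=
            Rs_le_Ls_of_mem (mem_L_add.2 (Or.inl ⟨Gl, hGl, rfl⟩))
          linarith
        · have e1 : Rs (Hl.add X) ≤ Ls (Hlr.add X) :=
            Rs_le_Ls_of_memR (mem_R_add.2 (Or.inl ⟨Hlr, hHlr, rfl⟩))
          have e2 : Ls (Hlr.add X) ≤ Ls (G.add X) := (hge X hX).1
          linarith
      · have hIH := (ge_aux hG hH h1l h1r h2 h3 Xl (hX.memL hXl)).2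
        have e2 : Rs (G.add Xl) ≤ Ls (G.add X) :=
          Rs_le_Ls_of_mem (mem_L_add.2 (Or.inr ⟨Xl, hXl, rfl⟩))
        linarith
  · by_cases hGX : (G.add X).R = []
    · obtain ⟨hGR, hXR⟩ := R_add_eq_nil.1 hGX
      rw [Rs_of_nil hGX, ra_add]
      have e1 : rsO G = G.ra := rsO_of_nil hGR
      have e2 := pass_right' hH hX hXR
      linarith
    · refine le_Rs hGX ?_
      intro y hy
      rcases mem_R_add.1 hy with ⟨Gr, hGr, rfl⟩ | ⟨Xr, hXr, rfl⟩
      · rcases h3 Gr hGr with ⟨Hr, hHr, hge⟩ | ⟨Grl, hGrl, hge⟩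
        · have e1 : Rs (H.add X) ≤ Ls (Hr.add X) :=
            Rs_le_Ls_of_memR (mem_R_add.2 (Or.inl ⟨Hr, hHr, rfl⟩))
          have e2 : Ls (Hr.add X) ≤ Ls (Gr.add X) := (hge X hX).1
          linarith
        · have e1 : Rs (H.add X) ≤ Rs (Grl.add X) := (hge X hX).2
          have e2 : Rs (Grl.add X) ≤ Ls (Gr.add X) :=
            Rs_le_Ls_of_mem (mem_L_add.2 (Or.inl ⟨Grl, hGrl, rfl⟩))
          linarith
      · have hIH := (ge_aux hG hH h1l h1r h2 h3 Xr (hX.memR hXr)).1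
        have e1 : Rs (H.add X) ≤ Ls (H.add Xr) :=
          Rs_le_Ls_of_memR (mem_R_add.2 (Or.inr ⟨Xr, hXr, rfl⟩))
        linarith
termination_by sizeOf X
decreasing_by
  · exact sizeOf_lt_L hXl
  · exact sizeOf_lt_R hXr

theorem ge_of_conditions {G H : SG} (hG : G.Guaranteed) (hH : H.Guaranteed)
    (h1l : lsU H ≤ lsU G) (h1r : rsO H ≤ rsO G)
    (h2 : ∀ Hl ∈ H.L, (∃ Gl ∈ G.L, Gl.Ge Hl) ∨ (∃ Hlr ∈ Hl.R, G.Ge Hlr))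
    (h3 : ∀ Gr ∈ G.R, (∃ Hr ∈ H.R, Gr.Ge Hr) ∨ (∃ Grl ∈ Gr.L, Grl.Ge H)) :
    G.Ge H := fun X hX =>
  ⟨(ge_aux hG hH h1l h1r h2 h3 X hX).1, (ge_aux hG hH h1l h1r h2 h3 X hX).2⟩

-- ===== Phase 6: the linking construction =====

instance : Inhabited SG := ⟨zero⟩

theorem list_choice {l : List SG} {p : SG → SG → Prop}
    (h : ∀ x ∈ l, ∃ y, p x y) : ∃ f : SG → SG, ∀ x ∈ l, p x (f x) := by
  classical
  refine ⟨fun x => if hx : ∃ y, p x y then hx.choose else default, fun x hx => ?_⟩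
  have hex := h x hx
  simp only [dif_pos hex]
  exact hex.choose_spec

theorem guaranteed_mk_of_ne {a b : ℝ} {l r : List SG} (hl : l ≠ []) (hr : r ≠ [])
    (h1 : ∀ x ∈ l, x.Guaranteed) (h2 : ∀ x ∈ r, x.Guaranteed) :
    (mk a b l r).Guaranteed := by
  rw [guaranteed_def]
  exact ⟨h1, h2, fun hc => absurd hc hl, fun hc => absurd hc hr⟩

theorem linked_of_not_ge (A B : SG) (hA : A.Guaranteed) (hB : B.Guaranteed)
    (hAL : ∀ Al ∈ A.L, ¬ Al.Ge B) (hBR : ∀ Br ∈ B.R, ¬ A.Ge Br) :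
    ∃ T : SG, T.Guaranteed ∧ Ls (A.add T) < 0 ∧ 0 < Rs (B.add T) := by
  -- Left-option separators
  have hUs : ∀ Al ∈ A.L, ∃ U : SG, U.Guaranteed ∧ Ls (Al.add U) < 0 ∧ 0 < Ls (B.add U) := by
    intro Al hAl
    have hAlG := hA.memL hAl
    have hnot := hAL Al hAl
    by_cases hcase1 : lsU B ≤ lsU Al ∧ rsO B ≤ rsO Al
    · by_cases hcase2 : ∀ Bl ∈ B.L, (∃ All ∈ Al.L, All.Ge Bl) ∨ (∃ Blr ∈ Bl.R, Al.Ge Blr)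
      · have hcase3 : ¬ ∀ Alr ∈ Al.R,
            (∃ Br' ∈ B.R, Alr.Ge Br') ∨ (∃ Alrl ∈ Alr.L, Alrl.Ge B) :=
          fun c3 => hnot (ge_of_conditions hAlG hB hcase1.1 hcase1.2 hcase2 c3)
        push_neg at hcase3
        obtain ⟨Alr, hAlr, hx, hy⟩ := hcase3
        obtain ⟨T', hT'g, hT'1, hT'2⟩ :=
          linked_of_not_ge Alr B (hAlG.memR hAlr) hB hy hx
        set M' : ℝ := (WithBot.unbotD 0 (Al.L.map Ls).maximum) + 1 with hM'
        refine ⟨mk 0 0 [T'] [num (-M')], ?_, ?_, ?_⟩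
        · exact guaranteed_mk_of_ne (List.cons_ne_nil _ _) (List.cons_ne_nil _ _)
            (by simpa using hT'g) (by simpa using guaranteed_num (-M'))
        · have hne : (Al.add (mk 0 0 [T'] [num (-M')])).L ≠ [] := by
            intro hc; simpa using (L_add_eq_nil.1 hc).2
          obtain ⟨y, hy', he⟩ := exists_Ls hne
          rw [he]
          rcases mem_L_add.1 hy' with ⟨All, hAll, rfl⟩ | ⟨W, hW, rfl⟩
          · have e1 : Rs (All.add (mk 0 0 [T'] [num (-M')])) ≤ Ls (All.add (num (-M'))) :=
              Rs_le_Ls_of_memR (mem_R_add.2 (Or.inr ⟨num (-M'), by simp, rfl⟩))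
            have e2 : Ls (All.add (num (-M'))) = Ls All + (-M') := Ls_add_num _ _
            have e3 : Ls All ≤ WithBot.unbotD 0 (Al.L.map Ls).maximum :=
              le_max_unbot 0 (List.mem_map_of_mem hAll)
            rw [hM'] at *
            linarith
          · simp only [L_mk, List.mem_singleton] at hW
            subst hW
            have e1 : Rs (Al.add W) ≤ Ls (Alr.add W) :=
              Rs_le_Ls_of_memR (mem_R_add.2 (Or.inl ⟨Alr, hAlr, rfl⟩))
            linarith
        · have e1 : Rs (B.add T') ≤ Ls (B.add (mk 0 0 [T'] [num (-M')])) :=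
            Rs_le_Ls_of_mem (mem_L_add.2 (Or.inr ⟨T', by simp, rfl⟩))
          linarith
      · push_neg at hcase2
        obtain ⟨Bl, hBl, hx, hy⟩ := hcase2
        obtain ⟨T', hT'g, hT'1, hT'2⟩ :=
          linked_of_not_ge Al Bl hAlG (hB.memL hBl) hx hy
        refine ⟨T', hT'g, hT'1, ?_⟩
        have e1 : Rs (Bl.add T') ≤ Ls (B.add T') :=
          Rs_le_Ls_of_mem (mem_L_add.2 (Or.inl ⟨Bl, hBl, rfl⟩))
        linarith
    · rw [not_and_or] at hcase1
      rcases hcase1 with hq | hq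
      · push_neg at hq
        obtain ⟨t, ht1, ht2⟩ := exists_between hq
        obtain ⟨n₀, hn₀⟩ := exists_lsU_lt ht1
        refine ⟨Wc (-t) n₀, guaranteed_Wc _ _, ?_, ?_⟩
        · rw [Ls_add_Wc]; linarith
        · have := lsU_le B n₀
          rw [Ls_add_Wc]; linarith
      · push_neg at hq
        obtain ⟨t, ht1, ht2⟩ := exists_between hq
        obtain ⟨n₀, hn₀⟩ := exists_lt_rsO ht2
        set M' : ℝ := (WithBot.unbotD 0 (Al.L.map Ls).maximum) + 1 with hM'
        refine ⟨mk 0 0 [Mc (-t) n₀] [num (-M')], ?_, ?_, ?_⟩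
        · exact guaranteed_mk_of_ne (List.cons_ne_nil _ _) (List.cons_ne_nil _ _)
            (by simpa using guaranteed_Mc (-t) n₀) (by simpa using guaranteed_num (-M'))
        · have hne : (Al.add (mk 0 0 [Mc (-t) n₀] [num (-M')])).L ≠ [] := by
            intro hc; simpa using (L_add_eq_nil.1 hc).2
          obtain ⟨y, hy', he⟩ := exists_Ls hne
          rw [he]
          rcases mem_L_add.1 hy' with ⟨All, hAll, rfl⟩ | ⟨W, hW, rfl⟩
          · have e1 : Rs (All.add (mk 0 0 [Mc (-t) n₀] [num (-M')])) ≤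
                Ls (All.add (num (-M'))) :=
              Rs_le_Ls_of_memR (mem_R_add.2 (Or.inr ⟨num (-M'), by simp, rfl⟩))
            have e2 : Ls (All.add (num (-M'))) = Ls All + (-M') := Ls_add_num _ _
            have e3 : Ls All ≤ WithBot.unbotD 0 (Al.L.map Ls).maximum :=
              le_max_unbot 0 (List.mem_map_of_mem hAll)
            rw [hM'] at *
            linarith
          · simp only [L_mk, List.mem_singleton] at hW
            subst hW
            have e1 : Rs (Al.add (Mc (-t) n₀)) = Rs (Al.add (wait n₀)) + (-t) := Rs_add_Mc _ _ _
            have e2 := le_rsO Al n₀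
            linarith
        · have e1 : Rs (B.add (Mc (-t) n₀)) ≤ Ls (B.add (mk 0 0 [Mc (-t) n₀] [num (-M')])) :=
            Rs_le_Ls_of_mem (mem_L_add.2 (Or.inr ⟨Mc (-t) n₀, by simp, rfl⟩))
          have e2 : Rs (B.add (Mc (-t) n₀)) = Rs (B.add (wait n₀)) + (-t) := Rs_add_Mc _ _ _
          linarith
  -- Right-option separators
  have hVs : ∀ Br ∈ B.R, ∃ V : SG, V.Guaranteed ∧ Rs (A.add V) < 0 ∧ 0 < Rs (Br.add V) := by
    intro Br hBr
    have hBrG := hB.memR hBr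
    have hnot := hBR Br hBr
    by_cases hcase1 : lsU Br ≤ lsU A ∧ rsO Br ≤ rsO A
    · by_cases hcase2 : ∀ Brl ∈ Br.L, (∃ Al' ∈ A.L, Al'.Ge Brl) ∨ (∃ Brlr ∈ Brl.R, A.Ge Brlr)
      · have hcase3 : ¬ ∀ Ar ∈ A.R,
            (∃ Br' ∈ Br.R, Ar.Ge Br') ∨ (∃ Arl ∈ Ar.L, Arl.Ge Br) :=
          fun c3 => hnot (ge_of_conditions hA hBrG hcase1.1 hcase1.2 hcase2 c3)
        push_neg at hcase3
        obtain ⟨Ar, hAr, hx, hy⟩ := hcase3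
        obtain ⟨T', hT'g, hT'1, hT'2⟩ :=
          linked_of_not_ge Ar Br (hA.memR hAr) hBrG hy hx
        refine ⟨T', hT'g, ?_, hT'2⟩
        have e1 : Rs (A.add T') ≤ Ls (Ar.add T') :=
          Rs_le_Ls_of_memR (mem_R_add.2 (Or.inl ⟨Ar, hAr, rfl⟩))
        linarith
      · push_neg at hcase2
        obtain ⟨Brl, hBrl, hx, hy⟩ := hcase2
        obtain ⟨T', hT'g, hT'1, hT'2⟩ :=
          linked_of_not_ge A Brl hA (hBrG.memL hBrl) hx hy
        set M' : ℝ := (WithBot.unbotD 0 (Br.R.map (fun x => -(Rs x))).maximum) + 1 with hM'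
        refine ⟨mk 0 0 [num M'] [T'], ?_, ?_, ?_⟩
        · exact guaranteed_mk_of_ne (List.cons_ne_nil _ _) (List.cons_ne_nil _ _)
            (by simpa using guaranteed_num M') (by simpa using hT'g)
        · have e1 : Rs (A.add (mk 0 0 [num M'] [T'])) ≤ Ls (A.add T') :=
            Rs_le_Ls_of_memR (mem_R_add.2 (Or.inr ⟨T', by simp, rfl⟩))
          linarith
        · have hne : (Br.add (mk 0 0 [num M'] [T'])).R ≠ [] := by
            intro hc; simpa using (R_add_eq_nil.1 hc).2
          obtain ⟨y, hy', he⟩ := exists_Rs hne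
          rw [he]
          rcases mem_R_add.1 hy' with ⟨Brr, hBrr, rfl⟩ | ⟨W, hW, rfl⟩
          · have e1 : Rs (Brr.add (num M')) ≤ Ls (Brr.add (mk 0 0 [num M'] [T'])) :=
              Rs_le_Ls_of_mem (mem_L_add.2 (Or.inr ⟨num M', by simp, rfl⟩))
            have e2 : Rs (Brr.add (num M')) = Rs Brr + M' := Rs_add_num _ _
            have e3 : -(Rs Brr) ≤ (WithBot.unbotD 0 (Br.R.map (fun x => -(Rs x))).maximum) :=
              le_max_unbot 0 (List.mem_map_of_mem hBrr)
            rw [hM'] at *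
            linarith
          · simp only [R_mk, List.mem_singleton] at hW
            subst hW
            have e1 : Rs (Brl.add W) ≤ Ls (Br.add W) :=
              Rs_le_Ls_of_mem (mem_L_add.2 (Or.inl ⟨Brl, hBrl, rfl⟩))
            linarith
    · rw [not_and_or] at hcase1
      rcases hcase1 with hq | hq
      · push_neg at hq
        obtain ⟨t, ht1, ht2⟩ := exists_between hq
        obtain ⟨n₀, hn₀⟩ := exists_lsU_lt ht1
        set M' : ℝ := (WithBot.unbotD 0 (Br.R.map (fun x => -(Rs x))).maximum) + 1 with hM'
        refine ⟨mk 0 0 [num M'] [Wc (-t) n₀], ?_, ?_, ?_⟩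
        · exact guaranteed_mk_of_ne (List.cons_ne_nil _ _) (List.cons_ne_nil _ _)
            (by simpa using guaranteed_num M') (by simpa using guaranteed_Wc (-t) n₀)
        · have e1 : Rs (A.add (mk 0 0 [num M'] [Wc (-t) n₀])) ≤ Ls (A.add (Wc (-t) n₀)) :=
            Rs_le_Ls_of_memR (mem_R_add.2 (Or.inr ⟨Wc (-t) n₀, by simp, rfl⟩))
          have e2 : Ls (A.add (Wc (-t) n₀)) = Ls (A.add (conj (wait n₀))) + (-t) :=
            Ls_add_Wc _ _ _
          linarith
        · have hne : (Br.add (mk 0 0 [num M'] [Wc (-t) n₀])).R ≠ [] := by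
            intro hc; simpa using (R_add_eq_nil.1 hc).2
          obtain ⟨y, hy', he⟩ := exists_Rs hne
          rw [he]
          rcases mem_R_add.1 hy' with ⟨Brr, hBrr, rfl⟩ | ⟨W, hW, rfl⟩
          · have e1 : Rs (Brr.add (num M')) ≤ Ls (Brr.add (mk 0 0 [num M'] [Wc (-t) n₀])) :=
              Rs_le_Ls_of_mem (mem_L_add.2 (Or.inr ⟨num M', by simp, rfl⟩))
            have e2 : Rs (Brr.add (num M')) = Rs Brr + M' := Rs_add_num _ _
            have e3 : -(Rs Brr) ≤ (WithBot.unbotD 0 (Br.R.map (fun x => -(Rs x))).maximum) :=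
              le_max_unbot 0 (List.mem_map_of_mem hBrr)
            rw [hM'] at *
            linarith
          · simp only [R_mk, List.mem_singleton] at hW
            subst hW
            have e1 : Ls (Br.add (Wc (-t) n₀)) = Ls (Br.add (conj (wait n₀))) + (-t) :=
              Ls_add_Wc _ _ _
            have e2 := lsU_le Br n₀
            linarith
      · push_neg at hq
        obtain ⟨t, ht1, ht2⟩ := exists_between hq
        obtain ⟨n₀, hn₀⟩ := exists_lt_rsO ht2
        refine ⟨Mc (-t) n₀, guaranteed_Mc _ _, ?_, ?_⟩
        · have e2 := le_rsO A n₀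
          rw [Rs_add_Mc]; linarith
        · rw [Rs_add_Mc]; linarith
  -- assemble T
  obtain ⟨f, hf⟩ := list_choice hUs
  obtain ⟨g, hg⟩ := list_choice hVs
  refine ⟨mk 0 0 (num (-(Rs A + 1)) :: B.R.map g) (num (1 - Ls B) :: A.L.map f), ?_, ?_, ?_⟩
  · refine guaranteed_mk_of_ne (List.cons_ne_nil _ _) (List.cons_ne_nil _ _) ?_ ?_
    · intro x hx
      rcases List.mem_cons.1 hx with rfl | hx
      · exact guaranteed_num _
      · obtain ⟨Br, hBr, rfl⟩ := List.mem_map.1 hx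
        exact (hg Br hBr).1
    · intro x hx
      rcases List.mem_cons.1 hx with rfl | hx
      · exact guaranteed_num _
      · obtain ⟨Al, hAl, rfl⟩ := List.mem_map.1 hx
        exact (hf Al hAl).1
  · have hne : (A.add (mk 0 0 (num (-(Rs A + 1)) :: B.R.map g)
        (num (1 - Ls B) :: A.L.map f))).L ≠ [] := by
      intro hc; simpa using (L_add_eq_nil.1 hc).2
    obtain ⟨y, hy', he⟩ := exists_Ls hne
    rw [he]
    rcases mem_L_add.1 hy' with ⟨Al, hAl, rfl⟩ | ⟨V, hV, rfl⟩
    · have e1 : Rs (Al.add (mk 0 0 (num (-(Rs A + 1)) :: B.R.map g)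
          (num (1 - Ls B) :: A.L.map f))) ≤ Ls (Al.add (f Al)) :=
        Rs_le_Ls_of_memR (mem_R_add.2 (Or.inr
          ⟨f Al, by simp [List.mem_cons, List.mem_map_of_mem (f := f) hAl], rfl⟩))
      have e2 := (hf Al hAl).2.1
      linarith
    · simp only [L_mk, List.mem_cons] at hV
      rcases hV with rfl | hV
      · rw [Rs_add_num]; linarith
      · obtain ⟨Br, hBr, rfl⟩ := List.mem_map.1 hV
        exact (hg Br hBr).2.1
  · have hne : (B.add (mk 0 0 (num (-(Rs A + 1)) :: B.R.map g)
        (num (1 - Ls B) :: A.L.map f))).R ≠ [] := by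
      intro hc; simpa using (R_add_eq_nil.1 hc).2
    obtain ⟨y, hy', he⟩ := exists_Rs hne
    rw [he]
    rcases mem_R_add.1 hy' with ⟨Br, hBr, rfl⟩ | ⟨U, hU, rfl⟩
    · have e1 : Rs (Br.add (g Br)) ≤ Ls (Br.add (mk 0 0 (num (-(Rs A + 1)) :: B.R.map g)
          (num (1 - Ls B) :: A.L.map f))) :=
        Rs_le_Ls_of_mem (mem_L_add.2 (Or.inr
          ⟨g Br, by simp [List.mem_cons, List.mem_map_of_mem (f := g) hBr], rfl⟩))
      have e2 := (hg Br hBr).2.2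
      linarith
    · simp only [R_mk, List.mem_cons] at hU
      rcases hU with rfl | hU
      · rw [Ls_add_num]; linarith
      · obtain ⟨Al, hAl, rfl⟩ := List.mem_map.1 hU
        exact (hf Al hAl).2.2
termination_by sizeOf A + sizeOf B
decreasing_by
  all_goals first
  | (have h1 := sizeOf_lt_L hAl; have h2 := sizeOf_lt_R hAlr; omega)
  | (have h1 := sizeOf_lt_L hAl; have h2 := sizeOf_lt_L hBl; omega)
  | (have h1 := sizeOf_lt_R hAr; have h2 := sizeOf_lt_R hBr; omega)
  | (have h1 := sizeOf_lt_R hBr; have h2 := sizeOf_lt_L hBrl; omega)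

-- ===== Phase 7: the theorem =====

theorem constructive_comparison' (G H : SG) (hG : G.Guaranteed)
    (hH : H.Guaranteed) :
    G.Ge H ↔
      ((G.lsU ≥ H.lsU ∧ G.rsO ≥ H.rsO) ∧
       (∀ Hl ∈ H.L, (∃ Gl ∈ G.L, Gl.Ge Hl) ∨ (∃ Hlr ∈ Hl.R, G.Ge Hlr)) ∧
       (∀ Gr ∈ G.R, (∃ Hr ∈ H.R, Gr.Ge Hr) ∨ (∃ Grl ∈ Gr.L, Grl.Ge H))) := by
  constructor
  · intro hGe
    refine ⟨⟨?_, ?_⟩, ?_, ?_⟩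
    · refine le_lsU fun n => ?_
      have e1 := lsU_le H n
      have e2 := (hGe (conj (wait n)) (guaranteed_conj_wait n)).1
      linarith
    · refine rsO_le fun n => ?_
      have e1 := le_rsO G n
      have e2 := (hGe (wait n) (guaranteed_wait n)).2
      linarith
    · intro Hl hHl
      by_contra hcon
      push_neg at hcon
      obtain ⟨h2a, h2b⟩ := hcon
      obtain ⟨T, hTg, hT1, hT2⟩ := linked_of_not_ge G Hl hG (hH.memL hHl) h2a h2b
      have e1 := (hGe T hTg).1
      have e2 : Rs (Hl.add T) ≤ Ls (H.add T) :=
        Rs_le_Ls_of_mem (mem_L_add.2 (Or.inl ⟨Hl, hHl, rfl⟩))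
      simp only [ge_iff_le] at e1
      linarith
    · intro Gr hGr
      by_contra hcon
      push_neg at hcon
      obtain ⟨h3a, h3b⟩ := hcon
      obtain ⟨T, hTg, hT1, hT2⟩ := linked_of_not_ge Gr H (hG.memR hGr) hH h3b h3a
      have e1 := (hGe T hTg).2
      have e2 : Rs (G.add T) ≤ Ls (Gr.add T) :=
        Rs_le_Ls_of_memR (mem_R_add.2 (Or.inl ⟨Gr, hGr, rfl⟩))
      simp only [ge_iff_le] at e1
      linarith
  · rintro ⟨⟨h1l, h1r⟩, h2, h3⟩
    exact ge_of_conditions hG hH h1l h1r h2 h3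

/-- Constructive Comparison. -/
theorem constructive_comparison (G H : SG) (hG : G.Guaranteed)
    (hH : H.Guaranteed) :
    G.Ge H ↔
      ((G.lsU ≥ H.lsU ∧ G.rsO ≥ H.rsO) ∧
       (∀ Hl ∈ H.L, (∃ Gl ∈ G.L, Gl.Ge Hl) ∨ (∃ Hlr ∈ Hl.R, G.Ge Hlr)) ∧
       (∀ Gr ∈ G.R, (∃ Hr ∈ H.R, Gr.Ge Hr) ∨ (∃ Grl ∈ Gr.L, Grl.Ge H))) :=
  constructive_comparison' G H hG hH

end SG
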